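/- For y₁,…,yₙ ∈ M, the Grossman–Larson product of the letters expands as y₁ ∗ ⋯ ∗ yₙ = y₁⋯yₙ + Σ_{π ≠ 0̂} (y₁⋯yₙ)^π, where the sum is over set partitions π of {1,…,n} different from the discrete partition, with (y₁⋯yₙ)^π defined via iterated right-nested ▷-products over the blocks ordered by increasing maxima. -/

import Mathlib

open TensorProduct TensorAlgebra

variable (k M : Type*) [CommRing k] [AddCommGroup M] [Module k M]

/-- The linear map sending `x ∈ M` to the primitive element `ι x ⊗ 1 + 1 ⊗ ι x`. -/
noncomputable def primMap : M →ₗ[k] TensorAlgebra k M ⊗[k] TensorAlgebra k M :=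
  ((TensorProduct.mk k (TensorAlgebra k M) (TensorAlgebra k M)).flip 1).comp (ι k) +
    (TensorProduct.mk k (TensorAlgebra k M) (TensorAlgebra k M) 1).comp (ι k)

/-- The unshuffle coproduct on the tensor algebra: the unique algebra morphism
`Δ : T(M) → T(M) ⊗ T(M)` for which every element of `M` is primitive. -/
noncomputable def unshuffle :
    TensorAlgebra k M →ₐ[k] TensorAlgebra k M ⊗[k] TensorAlgebra k M :=
  TensorAlgebra.lift k (primMap k M)

/-- The counit of the tensor algebra: the algebra morphism killing `M`. -/
noncomputable def counit : TensorAlgebra k M →ₐ[k] k :=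
  TensorAlgebra.lift k (0 : M →ₗ[k] k)

attribute [local instance] Classical.propDecidable

/-- The Grossman–Larson product `U ∗ V := U₍₁₎ · (U₍₂₎ ▷ V)` on the tensor algebra,
as a bilinear map, built from the unshuffle coproduct and the extended product `t`. -/
noncomputable def glL {k M : Type*} [CommRing k] [AddCommGroup M] [Module k M]
    (t : TensorAlgebra k M →ₗ[k] TensorAlgebra k M →ₗ[k] TensorAlgebra k M) :
    TensorAlgebra k M →ₗ[k] TensorAlgebra k M →ₗ[k] TensorAlgebra k M :=
  (TensorProduct.lift
    ((LinearMap.lcomp k (TensorAlgebra k M →ₗ[k] TensorAlgebra k M) t).comp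
      ((LinearMap.llcomp k (TensorAlgebra k M) (TensorAlgebra k M)
        (TensorAlgebra k M)).comp (LinearMap.mul k (TensorAlgebra k M))))).comp
    (unshuffle k M).toLinearMap

/-- Right-nested magmatic product over a list:
`nest m y [b₁,…,b_ℓ] = y b₁ ▷ (y b₂ ▷ (⋯ ▷ y b_ℓ))` (and `0` on the empty list). -/
def nest {α N : Type*} [Zero N] (m : N → N → N) (y : α → N) : List α → N
  | [] => 0
  | a :: rest => if rest.isEmpty then y a else m (y a) (nest m y rest)

/-- `π` is a set partition of `{0,…,n−1}`: no empty block, and every element lies in a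
unique block. -/
def IsSetPartition {n : ℕ} (π : Finset (Finset (Fin n))) : Prop :=
  ∅ ∉ π ∧ ∀ i : Fin n, ∃! B, B ∈ π ∧ i ∈ B

/-- The factor contributed at position `i` by the partition `π`: if `i` is the maximum
of some block `B` of `π`, this is `ι(y_B)` where `y_B` is the right-nested `▷`-product
of the `y_b`, `b ∈ B`, in increasing order; otherwise it is `1`. -/
noncomputable def partFactor {k M : Type*} [CommRing k] [AddCommGroup M] [Module k M]
    (m : M →ₗ[k] M →ₗ[k] M) {n : ℕ} (y : Fin n → M)
    (π : Finset (Finset (Fin n))) (i : Fin n) : TensorAlgebra k M :=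
  if (π.filter fun B => B.max = (i : WithBot (Fin n))) = ∅ then 1
  else ∑ B ∈ π.filter (fun B => B.max = (i : WithBot (Fin n))),
    ι k (nest (fun a b => m a b) y (B.sort (· ≤ ·)))

/-- The monomial `(y₁⋯yₙ)^π = y_{B₁}⋯y_{B_{|π|}}` associated to a set partition `π`,
with blocks ordered by increasing maxima. -/
noncomputable def partTerm {k M : Type*} [CommRing k] [AddCommGroup M] [Module k M]
    (m : M →ₗ[k] M →ₗ[k] M) {n : ℕ} (y : Fin n → M)
    (π : Finset (Finset (Fin n))) : TensorAlgebra k M :=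
  (((List.finRange n).map (partFactor m y π)).prod)

/-- The discrete partition `0̂` of `{0,…,n−1}` into singletons. -/
def discretePartition (n : ℕ) : Finset (Finset (Fin n)) :=
  Finset.univ.image (fun i : Fin n => ({i} : Finset (Fin n)))

namespace GLExp

open Finset

variable {n : ℕ}

def esucc (B : Finset (Fin n)) : Finset (Fin (n + 1)) := B.image Fin.succ

noncomputable def dsucc (B : Finset (Fin (n + 1))) : Finset (Fin n) :=
  Finset.univ.filter (fun i => i.succ ∈ B)

lemma succ_mem_esucc {B : Finset (Fin n)} {j : Fin n} : j.succ ∈ esucc B ↔ j ∈ B := by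
  simp [esucc, (Fin.succ_injective n).eq_iff]

lemma zero_not_mem_esucc {B : Finset (Fin n)} : (0 : Fin (n + 1)) ∉ esucc B := by
  simp only [esucc, Finset.mem_image, not_exists]
  rintro a ⟨ha, h⟩
  exact Fin.succ_ne_zero a h

lemma esucc_injective : Function.Injective (esucc (n := n)) :=
  fun _ _ h => Finset.image_injective (Fin.succ_injective n) h

lemma esucc_eq_empty {B : Finset (Fin n)} : esucc B = ∅ ↔ B = ∅ := by
  simp [esucc]

lemma mem_dsucc {B : Finset (Fin (n + 1))} {j : Fin n} : j ∈ dsucc B ↔ j.succ ∈ B := by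
  simp [dsucc]

lemma dsucc_esucc (B : Finset (Fin n)) : dsucc (esucc B) = B := by
  ext j; simp [mem_dsucc, succ_mem_esucc]

lemma esucc_dsucc (B : Finset (Fin (n + 1))) : esucc (dsucc B) = B.erase 0 := by
  ext i
  induction i using Fin.cases with
  | zero => simp [zero_not_mem_esucc]
  | succ j => simp [succ_mem_esucc, mem_dsucc, Finset.mem_erase, Fin.succ_ne_zero]

lemma dsucc_insert_zero (B : Finset (Fin (n + 1))) : dsucc (insert 0 B) = dsucc B := by
  ext j; simp [mem_dsucc, Fin.succ_ne_zero]

lemma dsucc_singleton_zero : dsucc ({0} : Finset (Fin (n + 1))) = ∅ := by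
  ext j; simp [mem_dsucc, Fin.succ_ne_zero]

lemma map_succ_sup (x y : WithBot (Fin n)) :
    WithBot.map Fin.succ (x ⊔ y) = WithBot.map Fin.succ x ⊔ WithBot.map Fin.succ y := by
  cases x with
  | bot => simp
  | coe a =>
    cases y with
    | bot => simp
    | coe b =>
      have : Fin.succ (a ⊔ b) = Fin.succ a ⊔ Fin.succ b := by
        rcases le_total a b with h | h
        · rw [sup_eq_right.2 h, sup_eq_right.2 (Fin.succ_le_succ_iff.2 h)]
        · rw [sup_eq_left.2 h, sup_eq_left.2 (Fin.succ_le_succ_iff.2 h)]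
      rw [← WithBot.coe_sup, WithBot.map_coe, WithBot.map_coe, WithBot.map_coe,
        ← WithBot.coe_sup, this]

lemma max_esucc (B : Finset (Fin n)) : (esucc B).max = WithBot.map Fin.succ B.max := by
  show (B.image Fin.succ).sup WithBot.some = WithBot.map Fin.succ (B.sup WithBot.some)
  rw [Finset.sup_image,
    Finset.comp_sup_eq_sup_comp (WithBot.map Fin.succ) map_succ_sup (by simp)]
  rfl

lemma max_esucc_eq_coe_succ {B : Finset (Fin n)} {j : Fin n} :
    (esucc B).max = ((j.succ : Fin (n + 1)) : WithBot (Fin (n + 1))) ↔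
      B.max = (j : WithBot (Fin n)) := by
  rw [max_esucc]
  cases hB : B.max with
  | bot =>
    simp only [WithBot.map_bot]
    exact iff_of_false (fun h => WithBot.bot_ne_coe h) (fun h => WithBot.bot_ne_coe h)
  | coe b =>
    simp only [WithBot.map_coe, WithBot.coe_inj]
    exact ⟨fun h => Fin.succ_injective n h, fun h => by rw [h]⟩

lemma max_esucc_ne_zero {B : Finset (Fin n)} :
    (esucc B).max ≠ ((0 : Fin (n + 1)) : WithBot (Fin (n + 1))) := by
  intro h
  exact zero_not_mem_esucc (Finset.mem_of_max h)

lemma sort_esucc (B : Finset (Fin n)) :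
    (esucc B).sort (· ≤ ·) = (B.sort (· ≤ ·)).map Fin.succ := by
  refine (fun hp h1 h2 => List.Perm.eq_of_pairwise'
    (r := ((· ≤ ·) : Fin (n + 1) → Fin (n + 1) → Prop)) h1 h2 hp) ?_ ?_ ?_
  · apply List.perm_of_nodup_nodup_toFinset_eq (Finset.sort_nodup _ _)
      ((Finset.sort_nodup _ _).map (Fin.succ_injective n))
    ext i
    simp [esucc]
  · exact Finset.pairwise_sort _ _
  · exact List.Pairwise.map _ (fun a b h => Fin.succ_le_succ_iff.2 h)
      (Finset.pairwise_sort _ _)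

lemma sort_insert_zero_esucc (B : Finset (Fin n)) :
    (insert (0 : Fin (n + 1)) (esucc B)).sort (· ≤ ·) =
      (0 : Fin (n + 1)) :: (B.sort (· ≤ ·)).map Fin.succ := by
  rw [Finset.sort_insert (α := Fin (n + 1)) (· ≤ ·) (fun b _ => Fin.zero_le b)
    zero_not_mem_esucc, sort_esucc]

lemma nest_map {α β N : Type*} [Zero N] (m : N → N → N) (y : β → N) (g : α → β) :
    ∀ l : List α, nest m y (l.map g) = nest m (y ∘ g) l
  | [] => rfl
  | a :: l => by
    simp only [List.map_cons, nest, List.isEmpty_iff, List.map_eq_nil_iff]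
    rw [nest_map m y g l]
    rfl

/-! ### Inserting / removing the element `0` in a set partition -/

noncomputable def ins0 (π : Finset (Finset (Fin n))) : Finset (Finset (Fin (n + 1))) :=
  insert {0} (π.image esucc)

noncomputable def insB (π : Finset (Finset (Fin n))) (B : Finset (Fin n)) :
    Finset (Finset (Fin (n + 1))) :=
  insert (insert 0 (esucc B)) ((π.erase B).image esucc)

noncomputable def blk0 (σ : Finset (Finset (Fin (n + 1)))) : Finset (Fin (n + 1)) :=
  σ.sup (fun C => if (0 : Fin (n + 1)) ∈ C then C else ∅)

noncomputable def down (σ : Finset (Finset (Fin (n + 1)))) : Finset (Finset (Fin n)) :=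
  (σ.erase {0}).image dsucc

lemma blk0_eq {σ : Finset (Finset (Fin (n + 1)))} (hσ : IsSetPartition σ)
    {C : Finset (Fin (n + 1))} (hC : C ∈ σ) (h0 : (0 : Fin (n + 1)) ∈ C) : blk0 σ = C := by
  refine le_antisymm (Finset.sup_le fun D hD => ?_) ?_
  · by_cases h : (0 : Fin (n + 1)) ∈ D
    · rw [if_pos h]
      exact le_of_eq ((hσ.2 0).unique ⟨hD, h⟩ ⟨hC, h0⟩)
    · rw [if_neg h]; exact Finset.empty_subset _
  · have : C = if (0 : Fin (n + 1)) ∈ C then C else ∅ := by rw [if_pos h0]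
    exact le_trans (le_of_eq this)
      (Finset.le_sup (f := fun C => if (0 : Fin (n + 1)) ∈ C then C else ∅) hC)

lemma blk0_mem {σ : Finset (Finset (Fin (n + 1)))} (hσ : IsSetPartition σ) :
    blk0 σ ∈ σ ∧ (0 : Fin (n + 1)) ∈ blk0 σ := by
  obtain ⟨B, ⟨hB, h0⟩, -⟩ := hσ.2 0
  rw [blk0_eq hσ hB h0]
  exact ⟨hB, h0⟩

lemma singleton_zero_not_mem_image_esucc {π : Finset (Finset (Fin n))} :
    ({0} : Finset (Fin (n + 1))) ∉ π.image esucc := by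
  simp only [Finset.mem_image, not_exists]
  rintro C ⟨-, hC⟩
  exact zero_not_mem_esucc (hC ▸ Finset.mem_singleton_self 0)

lemma insert_zero_esucc_ne_singleton {B : Finset (Fin n)} (hB : B.Nonempty) :
    insert (0 : Fin (n + 1)) (esucc B) ≠ ({0} : Finset (Fin (n + 1))) := by
  intro h
  obtain ⟨b, hb⟩ := hB
  have : b.succ ∈ ({0} : Finset (Fin (n + 1))) := by
    rw [← h]
    exact Finset.mem_insert_of_mem (succ_mem_esucc.2 hb)
  exact Fin.succ_ne_zero b (Finset.mem_singleton.1 this)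

lemma isSetPartition_ins0 {π : Finset (Finset (Fin n))} (hπ : IsSetPartition π) :
    IsSetPartition (ins0 π) := by
  constructor
  · intro h
    rcases Finset.mem_insert.1 h with h | h
    · exact Finset.singleton_ne_empty _ h.symm
    · obtain ⟨C, hC, hCe⟩ := Finset.mem_image.1 h
      exact hπ.1 (esucc_eq_empty.1 hCe ▸ hC)
  · intro i
    induction i using Fin.cases with
    | zero =>
      refine ⟨{0}, ⟨Finset.mem_insert_self _ _, Finset.mem_singleton_self 0⟩, ?_⟩
      rintro D ⟨hD, h0D⟩
      rcases Finset.mem_insert.1 hD with h | h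
      · exact h
      · obtain ⟨C, -, rfl⟩ := Finset.mem_image.1 h
        exact absurd h0D zero_not_mem_esucc
    | succ j =>
      obtain ⟨C, ⟨hC, hjC⟩, hCu⟩ := hπ.2 j
      refine ⟨esucc C, ⟨Finset.mem_insert_of_mem (Finset.mem_image_of_mem _ hC),
        succ_mem_esucc.2 hjC⟩, ?_⟩
      rintro D ⟨hD, hjD⟩
      rcases Finset.mem_insert.1 hD with h | h
      · exact absurd (h ▸ hjD) (by simp [Fin.succ_ne_zero])
      · obtain ⟨C', hC', rfl⟩ := Finset.mem_image.1 h
        rw [hCu C' ⟨hC', succ_mem_esucc.1 hjD⟩]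

lemma isSetPartition_insB {π : Finset (Finset (Fin n))} (hπ : IsSetPartition π)
    {B : Finset (Fin n)} (hB : B ∈ π) : IsSetPartition (insB π B) := by
  constructor
  · intro h
    rcases Finset.mem_insert.1 h with h | h
    · exact Finset.insert_ne_empty _ _ h.symm
    · obtain ⟨C, hC, hCe⟩ := Finset.mem_image.1 h
      exact hπ.1 (esucc_eq_empty.1 hCe ▸ Finset.mem_of_mem_erase hC)
  · intro i
    induction i using Fin.cases with
    | zero =>
      refine ⟨insert 0 (esucc B), ⟨Finset.mem_insert_self _ _,
        Finset.mem_insert_self _ _⟩, ?_⟩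
      rintro D ⟨hD, h0D⟩
      rcases Finset.mem_insert.1 hD with h | h
      · exact h
      · obtain ⟨C, -, rfl⟩ := Finset.mem_image.1 h
        exact absurd h0D zero_not_mem_esucc
    | succ j =>
      obtain ⟨C, ⟨hC, hjC⟩, hCu⟩ := hπ.2 j
      by_cases hCB : C = B
      · subst hCB
        refine ⟨insert 0 (esucc C), ⟨Finset.mem_insert_self _ _,
          Finset.mem_insert_of_mem (succ_mem_esucc.2 hjC)⟩, ?_⟩
        rintro D ⟨hD, hjD⟩
        rcases Finset.mem_insert.1 hD with h | h
        · exact h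
        · obtain ⟨C', hC', rfl⟩ := Finset.mem_image.1 h
          have : C' = C := hCu C' ⟨Finset.mem_of_mem_erase hC', succ_mem_esucc.1 hjD⟩
          exact absurd this (Finset.ne_of_mem_erase hC')
      · refine ⟨esucc C, ⟨Finset.mem_insert_of_mem
          (Finset.mem_image_of_mem _ (Finset.mem_erase.2 ⟨hCB, hC⟩)),
          succ_mem_esucc.2 hjC⟩, ?_⟩
        rintro D ⟨hD, hjD⟩
        rcases Finset.mem_insert.1 hD with h | h
        · subst h
          rcases Finset.mem_insert.1 hjD with h' | h'
          · exact absurd h' (Fin.succ_ne_zero j)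
          · exact absurd (hCu B ⟨hB, succ_mem_esucc.1 h'⟩).symm hCB
        · obtain ⟨C', hC', rfl⟩ := Finset.mem_image.1 h
          rw [hCu C' ⟨Finset.mem_of_mem_erase hC', succ_mem_esucc.1 hjD⟩]

lemma dsucc_eq_empty {C : Finset (Fin (n + 1))} (hC : C.Nonempty)
    (h : dsucc C = ∅) : C = {0} := by
  have hsub : C ⊆ {0} := by
    intro i hi
    induction i using Fin.cases with
    | zero => exact Finset.mem_singleton_self 0
    | succ j =>
      exact absurd (mem_dsucc.2 hi) (by simp [h])
  rcases Finset.subset_singleton_iff.1 hsub with h' | h'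
  · exact absurd h' (Finset.nonempty_iff_ne_empty.1 hC)
  · exact h'

lemma isSetPartition_down {σ : Finset (Finset (Fin (n + 1)))} (hσ : IsSetPartition σ) :
    IsSetPartition (down σ) := by
  constructor
  · intro h
    obtain ⟨C, hC, hCe⟩ := Finset.mem_image.1 h
    have hCσ := Finset.mem_of_mem_erase hC
    have : C = {0} := dsucc_eq_empty (Finset.nonempty_iff_ne_empty.2
      (fun he => hσ.1 (he ▸ hCσ))) hCe
    exact Finset.ne_of_mem_erase hC this
  · intro j
    obtain ⟨C, ⟨hC, hjC⟩, hCu⟩ := hσ.2 j.succ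
    have hC0 : C ≠ {0} := by
      intro h
      rw [h] at hjC
      exact Fin.succ_ne_zero j (Finset.mem_singleton.1 hjC)
    refine ⟨dsucc C, ⟨Finset.mem_image_of_mem _ (Finset.mem_erase.2 ⟨hC0, hC⟩),
      mem_dsucc.2 hjC⟩, ?_⟩
    rintro D ⟨hD, hjD⟩
    obtain ⟨C', hC', rfl⟩ := Finset.mem_image.1 hD
    rw [hCu C' ⟨Finset.mem_of_mem_erase hC', mem_dsucc.1 hjD⟩]

lemma down_ins0 {π : Finset (Finset (Fin n))} (hπ : ∅ ∉ π) : down (ins0 π) = π := by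
  rw [down, ins0, Finset.erase_insert singleton_zero_not_mem_image_esucc,
    Finset.image_image]
  rw [show dsucc ∘ esucc = id from funext dsucc_esucc, Finset.image_id]

lemma blk0_ins0 {π : Finset (Finset (Fin n))} (hπ : IsSetPartition π) :
    blk0 (ins0 π) = {0} :=
  blk0_eq (isSetPartition_ins0 hπ) (Finset.mem_insert_self _ _) (Finset.mem_singleton_self 0)

lemma singleton_zero_not_mem_insB {π : Finset (Finset (Fin n))} {B : Finset (Fin n)}
    (hB : B.Nonempty) : ({0} : Finset (Fin (n + 1))) ∉ insB π B := by
  intro h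
  rcases Finset.mem_insert.1 h with h | h
  · exact insert_zero_esucc_ne_singleton hB h.symm
  · exact singleton_zero_not_mem_image_esucc h

lemma down_insB {π : Finset (Finset (Fin n))} {B : Finset (Fin n)}
    (hB : B ∈ π) (hBne : B.Nonempty) : down (insB π B) = π := by
  rw [down, Finset.erase_eq_self.2 (singleton_zero_not_mem_insB hBne), insB,
    Finset.image_insert, Finset.image_image, dsucc_insert_zero, dsucc_esucc]
  rw [show dsucc ∘ esucc = id from funext dsucc_esucc, Finset.image_id,
    Finset.insert_erase hB]

lemma blk0_insB {π : Finset (Finset (Fin n))} (hπ : IsSetPartition π)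
    {B : Finset (Fin n)} (hB : B ∈ π) :
    blk0 (insB π B) = insert 0 (esucc B) :=
  blk0_eq (isSetPartition_insB hπ hB) (Finset.mem_insert_self _ _) (Finset.mem_insert_self _ _)

lemma g_down {σ : Finset (Finset (Fin (n + 1)))} (hσ : IsSetPartition σ) :
    (if dsucc (blk0 σ) = ∅ then ins0 (down σ) else insB (down σ) (dsucc (blk0 σ))) = σ := by
  obtain ⟨hB0σ, h0B0⟩ := blk0_mem hσ
  by_cases hd : dsucc (blk0 σ) = ∅
  · rw [if_pos hd]
    have hblk : blk0 σ = {0} :=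
      dsucc_eq_empty (Finset.nonempty_iff_ne_empty.2 (fun he => hσ.1 (he ▸ hB0σ))) hd
    rw [hblk] at hB0σ
    have him : (σ.erase {0}).image (esucc ∘ dsucc) = σ.erase {0} := by
      rw [show Finset.image (esucc ∘ dsucc) (σ.erase {0}) =
          Finset.image id (σ.erase {0}) from Finset.image_congr ?_, Finset.image_id]
      intro C hC
      simp only [Function.comp_apply, id_eq]
      rw [esucc_dsucc]
      apply Finset.erase_eq_self.2
      intro h0C
      exact Finset.ne_of_mem_erase hC ((hσ.2 0).unique ⟨Finset.mem_of_mem_erase hC, h0C⟩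
        ⟨hB0σ, Finset.mem_singleton_self 0⟩)
    rw [ins0, down, Finset.image_image, him, Finset.insert_erase hB0σ]
  · rw [if_neg hd]
    have hz : ({0} : Finset (Fin (n + 1))) ∉ σ := by
      intro h
      exact hd (by rw [blk0_eq hσ h (Finset.mem_singleton_self 0), dsucc_singleton_zero])
    have herase : σ.erase {0} = σ := Finset.erase_eq_self.2 hz
    have hzeroblk : ∀ C ∈ σ, C ≠ blk0 σ → (0 : Fin (n + 1)) ∉ C := by
      intro C hC hne h0C
      exact hne ((hσ.2 0).unique ⟨hC, h0C⟩ ⟨hB0σ, h0B0⟩)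
    have hinj : ∀ C ∈ σ, ∀ C' ∈ σ, dsucc C = dsucc C' → C = C' := by
      intro C hC C' hC' he
      by_contra hne
      have h1 : C.erase 0 = C'.erase 0 := by rw [← esucc_dsucc, he, esucc_dsucc]
      obtain ⟨i, hi⟩ := Finset.nonempty_iff_ne_empty.2 (fun h0 => hσ.1 (h0 ▸ hC))
      induction i using Fin.cases with
      | zero =>
        obtain ⟨i', hi'⟩ := Finset.nonempty_iff_ne_empty.2 (fun h0 => hσ.1 (h0 ▸ hC'))
        induction i' using Fin.cases with
        | zero => exact hne ((hσ.2 0).unique ⟨hC, hi⟩ ⟨hC', hi'⟩)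
        | succ j' =>
          have : j'.succ ∈ C.erase 0 := h1 ▸ Finset.mem_erase.2 ⟨Fin.succ_ne_zero j', hi'⟩
          exact hne ((hσ.2 j'.succ).unique ⟨hC, Finset.mem_of_mem_erase this⟩ ⟨hC', hi'⟩)
      | succ j =>
        have : j.succ ∈ C'.erase 0 := h1 ▸ Finset.mem_erase.2 ⟨Fin.succ_ne_zero j, hi⟩
        exact hne ((hσ.2 j.succ).unique ⟨hC, hi⟩ ⟨hC', Finset.mem_of_mem_erase this⟩)
    have herasedown : (down σ).erase (dsucc (blk0 σ)) = (σ.erase (blk0 σ)).image dsucc := by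
      ext D
      constructor
      · intro hD
        obtain ⟨C, hC, rfl⟩ := Finset.mem_image.1 (Finset.mem_of_mem_erase hD)
        rw [herase] at hC
        refine Finset.mem_image_of_mem _ (Finset.mem_erase.2 ⟨?_, hC⟩)
        intro h
        exact Finset.ne_of_mem_erase hD (congrArg dsucc h)
      · intro hD
        obtain ⟨C, hC, rfl⟩ := Finset.mem_image.1 hD
        refine Finset.mem_erase.2 ⟨?_, ?_⟩
        · intro h
          exact Finset.ne_of_mem_erase hC
            (hinj C (Finset.mem_of_mem_erase hC) (blk0 σ) hB0σ h)
        · rw [down, herase]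
          exact Finset.mem_image_of_mem _ (Finset.mem_of_mem_erase hC)
    have him : (σ.erase (blk0 σ)).image (esucc ∘ dsucc) = σ.erase (blk0 σ) := by
      rw [show Finset.image (esucc ∘ dsucc) (σ.erase (blk0 σ)) =
          Finset.image id (σ.erase (blk0 σ)) from Finset.image_congr ?_, Finset.image_id]
      intro C hC
      simp only [Function.comp_apply, id_eq]
      rw [esucc_dsucc]
      exact Finset.erase_eq_self.2 (hzeroblk C (Finset.mem_of_mem_erase hC)
        (Finset.ne_of_mem_erase hC))
    rw [insB, herasedown, Finset.image_image, him, esucc_dsucc,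
      Finset.insert_erase h0B0, Finset.insert_erase hB0σ]

lemma sum_partitions_succ {R : Type*} [AddCommMonoid R]
    (f : Finset (Finset (Fin (n + 1))) → R) :
    ∑ σ ∈ Finset.univ.filter (fun σ => IsSetPartition σ), f σ =
      ∑ π ∈ Finset.univ.filter (fun π : Finset (Finset (Fin n)) => IsSetPartition π),
        (f (ins0 π) + ∑ B ∈ π, f (insB π B)) := by
  have step : ∀ π ∈ Finset.univ.filter (fun π : Finset (Finset (Fin n)) =>
      IsSetPartition π), f (ins0 π) + ∑ B ∈ π, f (insB π B) =
      ∑ B ∈ insert ∅ π, f (if B = ∅ then ins0 π else insB π B) := by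
    intro π hπ
    have hπ' : IsSetPartition π := (Finset.mem_filter.1 hπ).2
    rw [Finset.sum_insert hπ'.1, if_pos rfl]
    congr 1
    exact (Finset.sum_congr rfl fun B hB =>
      by rw [if_neg (fun h : B = ∅ => hπ'.1 (h ▸ hB))]).symm
  rw [Finset.sum_congr rfl step]
  have main : ∑ σ ∈ Finset.univ.filter (fun σ => IsSetPartition σ), f σ =
      ∑ p ∈ (Finset.univ.filter (fun π : Finset (Finset (Fin n)) =>
        IsSetPartition π)).sigma (fun π => insert ∅ π),
        f (if p.2 = ∅ then ins0 p.1 else insB p.1 p.2) := by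
    apply Finset.sum_nbij' (i := fun σ => (⟨down σ, dsucc (blk0 σ)⟩ :
        Σ _ : Finset (Finset (Fin n)), Finset (Fin n)))
      (j := fun p => if p.2 = ∅ then ins0 p.1 else insB p.1 p.2)
    · -- i maps into sigma set
      intro σ hσ'
      have hσ : IsSetPartition σ := (Finset.mem_filter.1 hσ').2
      refine Finset.mem_sigma.2 ⟨Finset.mem_filter.2 ⟨Finset.mem_univ _,
        isSetPartition_down hσ⟩, ?_⟩
      by_cases hd : dsucc (blk0 σ) = ∅
      · rw [hd]; exact Finset.mem_insert_self _ _
      · apply Finset.mem_insert_of_mem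
        obtain ⟨hB0σ, h0B0⟩ := blk0_mem hσ
        have hblk : blk0 σ ≠ {0} := by
          intro h
          exact hd (by rw [h, dsucc_singleton_zero])
        exact Finset.mem_image_of_mem _ (Finset.mem_erase.2 ⟨hblk, hB0σ⟩)
    · -- j maps into partitions
      rintro ⟨π, B⟩ hp
      obtain ⟨hπ', hB⟩ := Finset.mem_sigma.1 hp
      have hπ : IsSetPartition π := (Finset.mem_filter.1 hπ').2
      by_cases hBe : B = ∅
      · simp only [hBe, if_pos]
        exact Finset.mem_filter.2 ⟨Finset.mem_univ _, isSetPartition_ins0 hπ⟩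
      · simp only [if_neg hBe]
        have hBπ : B ∈ π := by
          rcases Finset.mem_insert.1 hB with h | h
          · exact absurd h hBe
          · exact h
        exact Finset.mem_filter.2 ⟨Finset.mem_univ _, isSetPartition_insB hπ hBπ⟩
    · -- left inverse
      intro σ hσ'
      exact g_down (Finset.mem_filter.1 hσ').2
    · -- right inverse
      rintro ⟨π, B⟩ hp
      obtain ⟨hπ', hB⟩ := Finset.mem_sigma.1 hp
      have hπ : IsSetPartition π := (Finset.mem_filter.1 hπ').2
      by_cases hBe : B = ∅
      · subst hBe
        rw [if_pos rfl, Sigma.mk.inj_iff]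
        exact ⟨by rw [down_ins0 hπ.1], heq_of_eq (by rw [blk0_ins0 hπ,
          dsucc_singleton_zero])⟩
      · simp only [if_neg hBe]
        have hBπ : B ∈ π := by
          rcases Finset.mem_insert.1 hB with h | h
          · exact absurd h hBe
          · exact h
        have hBne : B.Nonempty := Finset.nonempty_iff_ne_empty.2
          (fun h => hπ.1 (h ▸ hBπ))
        rw [Sigma.mk.inj_iff]
        exact ⟨by rw [down_insB hBπ hBne], heq_of_eq (by
          rw [blk0_insB hπ hBπ, dsucc_insert_zero, dsucc_esucc])⟩
    · -- values agree
      intro σ hσ'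
      rw [g_down (Finset.mem_filter.1 hσ').2]
  rw [main, Finset.sum_sigma]

/-! ### `partFactor` under `ins0` and `insB` -/

section Algebra

variable {k M : Type*} [CommRing k] [AddCommGroup M] [Module k M]
variable (m : M →ₗ[k] M →ₗ[k] M)

lemma partFactor_ins0_zero (y : Fin (n + 1) → M) (π : Finset (Finset (Fin n))) :
    partFactor m y (ins0 π) 0 = ι k (y 0) := by
  have hfil : (ins0 π).filter
      (fun B => B.max = ((0 : Fin (n + 1)) : WithBot (Fin (n + 1)))) =
      {({0} : Finset (Fin (n + 1)))} := by
    rw [ins0, Finset.filter_insert, if_pos Finset.max_singleton, Finset.filter_image,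
      Finset.filter_false_of_mem (fun C _ => max_esucc_ne_zero), Finset.image_empty]
    simp
  rw [partFactor, hfil, if_neg (Finset.singleton_ne_empty _), Finset.sum_singleton,
    Finset.sort_singleton]
  rfl

lemma filter_max_ins0_succ (π : Finset (Finset (Fin n))) (j : Fin n) :
    (ins0 π).filter
      (fun B => B.max = ((j.succ : Fin (n + 1)) : WithBot (Fin (n + 1)))) =
      (π.filter (fun C => C.max = (j : WithBot (Fin n)))).image esucc := by
  rw [ins0, Finset.filter_insert, if_neg ?hz, Finset.filter_image]
  case hz =>
    rw [Finset.max_singleton]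
    exact fun h => Fin.succ_ne_zero j (WithBot.coe_inj.1 h).symm
  exact congrArg _ (Finset.filter_congr (fun C _ => max_esucc_eq_coe_succ))

lemma partFactor_ins0_succ (y : Fin (n + 1) → M) (π : Finset (Finset (Fin n)))
    (j : Fin n) :
    partFactor m y (ins0 π) j.succ = partFactor m (fun i => y i.succ) π j := by
  rw [partFactor, partFactor, filter_max_ins0_succ]
  by_cases h : π.filter (fun C => C.max = (j : WithBot (Fin n))) = ∅
  · rw [h, Finset.image_empty]
    simp
  · rw [if_neg (fun he => h (Finset.image_eq_empty.1 he)), if_neg h,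
      Finset.sum_image (fun a _ b _ hab => esucc_injective hab)]
    apply Finset.sum_congr rfl
    intro C _
    rw [sort_esucc, nest_map]
    rfl

lemma max_insert_zero_esucc {B : Finset (Fin n)} (hBne : B.Nonempty) :
    (insert (0 : Fin (n + 1)) (esucc B)).max = (esucc B).max := by
  show ((insert (0 : Fin (n + 1)) (esucc B)).sup WithBot.some) = _
  rw [Finset.sup_insert]
  obtain ⟨b, hb⟩ := hBne
  exact sup_eq_right.2 (le_trans (WithBot.coe_le_coe.2 (Fin.zero_le _))
    (Finset.le_sup (f := WithBot.some) (succ_mem_esucc.2 hb)))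

lemma partFactor_insB_zero (y : Fin (n + 1) → M) {π : Finset (Finset (Fin n))}
    {B : Finset (Fin n)} (hBne : B.Nonempty) :
    partFactor m y (insB π B) 0 = 1 := by
  rw [partFactor, if_pos]
  rw [insB, Finset.filter_insert, if_neg ?hbig, Finset.filter_image,
    Finset.filter_false_of_mem (fun C hC => max_esucc_ne_zero), Finset.image_empty]
  case hbig =>
    intro h
    obtain ⟨b, hb⟩ := hBne
    have hle := Finset.le_sup (s := insert (0 : Fin (n + 1)) (esucc B))
      (f := WithBot.some) (Finset.mem_insert_of_mem (succ_mem_esucc.2 hb))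
    rw [show (insert (0 : Fin (n+1)) (esucc B)).sup WithBot.some =
      (insert (0 : Fin (n+1)) (esucc B)).max from rfl, h] at hle
    exact Fin.succ_ne_zero b (Fin.le_zero_iff.1 (WithBot.coe_le_coe.1 hle))

lemma filter_max_insB_of_ne {π : Finset (Finset (Fin n))} {B : Finset (Fin n)}
    (hπ : IsSetPartition π) (hB : B ∈ π) {j : Fin n}
    (hj : B.max ≠ (j : WithBot (Fin n))) :
    (insB π B).filter
      (fun C => C.max = ((j.succ : Fin (n + 1)) : WithBot (Fin (n + 1)))) =
      (π.filter (fun C => C.max = (j : WithBot (Fin n)))).image esucc := by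
  have hBne : B.Nonempty := Finset.nonempty_iff_ne_empty.2 (fun h => hπ.1 (h ▸ hB))
  rw [insB, Finset.filter_insert, if_neg ?hbig, Finset.filter_image]
  case hbig =>
    rw [max_insert_zero_esucc hBne]
    exact fun h => hj (max_esucc_eq_coe_succ.1 h)
  rw [Finset.filter_congr (fun C _ => max_esucc_eq_coe_succ), Finset.filter_erase]
  exact congrArg _ (Finset.erase_eq_self.2 (fun h => hj (Finset.mem_filter.1 h).2))

lemma filter_max_insB_of_eq {π : Finset (Finset (Fin n))} {B : Finset (Fin n)}
    (hπ : IsSetPartition π) (hB : B ∈ π) {j : Fin n}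
    (hj : B.max = (j : WithBot (Fin n))) :
    (insB π B).filter
      (fun C => C.max = ((j.succ : Fin (n + 1)) : WithBot (Fin (n + 1)))) =
      {insert (0 : Fin (n + 1)) (esucc B)} := by
  have hBne : B.Nonempty := Finset.nonempty_iff_ne_empty.2 (fun h => hπ.1 (h ▸ hB))
  rw [insB, Finset.filter_insert, if_pos (by
    rw [max_insert_zero_esucc hBne]; exact max_esucc_eq_coe_succ.2 hj)]
  rw [Finset.filter_image, Finset.filter_congr (fun C _ => max_esucc_eq_coe_succ),
    Finset.filter_erase]
  have : (π.filter (fun C => C.max = (j : WithBot (Fin n)))).erase B = ∅ := by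
    apply Finset.eq_empty_of_forall_notMem
    intro C hC
    obtain ⟨hCB, hCf⟩ := Finset.mem_erase.1 hC
    obtain ⟨hCπ, hCm⟩ := Finset.mem_filter.1 hCf
    exact hCB ((hπ.2 j).unique ⟨hCπ, Finset.mem_of_max hCm⟩ ⟨hB, Finset.mem_of_max hj⟩)
  rw [this, Finset.image_empty]
  rfl

lemma partFactor_insB_succ (y : Fin (n + 1) → M) {π : Finset (Finset (Fin n))}
    {B : Finset (Fin n)} (hπ : IsSetPartition π) (hB : B ∈ π) (j : Fin n) :
    partFactor m y (insB π B) j.succ =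
      if B.max = (j : WithBot (Fin n)) then
        ι k (m (y 0) (nest (fun a b => m a b) (fun i => y i.succ) (B.sort (· ≤ ·))))
      else partFactor m (fun i => y i.succ) π j := by
  have hBne : B.Nonempty := Finset.nonempty_iff_ne_empty.2 (fun h => hπ.1 (h ▸ hB))
  by_cases hj : B.max = (j : WithBot (Fin n))
  · rw [if_pos hj, partFactor, filter_max_insB_of_eq hπ hB hj,
      if_neg (Finset.singleton_ne_empty _), Finset.sum_singleton,
      sort_insert_zero_esucc]
    obtain ⟨b, hb⟩ := hBne
    have hnil : B.sort (· ≤ ·) ≠ [] :=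
      List.ne_nil_of_mem ((Finset.mem_sort _).2 hb)
    have hstep : nest (fun a b => (m a) b) y
        ((0 : Fin (n + 1)) :: (B.sort (· ≤ ·)).map Fin.succ) =
        m (y 0) (nest (fun a b => (m a) b) y ((B.sort (· ≤ ·)).map Fin.succ)) := by
      simp only [nest]
      rw [if_neg (by simpa [List.isEmpty_iff] using hnil)]
    rw [hstep, nest_map]
    rfl
  · rw [if_neg hj, partFactor, partFactor, filter_max_insB_of_ne hπ hB hj]
    by_cases h : π.filter (fun C => C.max = (j : WithBot (Fin n))) = ∅
    · rw [h, Finset.image_empty]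
      simp
    · rw [if_neg (fun he => h (Finset.image_eq_empty.1 he)), if_neg h,
        Finset.sum_image (fun a _ b _ hab => esucc_injective hab)]
      apply Finset.sum_congr rfl
      intro C _
      rw [sort_esucc, nest_map]
      rfl

lemma partTerm_ins0 (y : Fin (n + 1) → M) (π : Finset (Finset (Fin n))) :
    partTerm m y (ins0 π) = ι k (y 0) * partTerm m (fun i => y i.succ) π := by
  rw [partTerm, List.finRange_succ, List.map_cons, List.prod_cons, List.map_map,
    partFactor_ins0_zero, partTerm]
  congr 1
  congr 1
  apply List.map_congr_left
  intro j _
  exact partFactor_ins0_succ m y π j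

lemma partTerm_insB (y : Fin (n + 1) → M) {π : Finset (Finset (Fin n))}
    {B : Finset (Fin n)} (hπ : IsSetPartition π) (hB : B ∈ π)
    {j : Fin n} (hj : B.max = (j : WithBot (Fin n))) :
    partTerm m y (insB π B) =
      ((List.finRange n).map (Function.update (partFactor m (fun i => y i.succ) π) j
        (ι k (m (y 0) (nest (fun a b => (m a) b) (fun i => y i.succ)
          (B.sort (· ≤ ·))))))).prod := by
  have hBne : B.Nonempty := Finset.nonempty_iff_ne_empty.2 (fun h => hπ.1 (h ▸ hB))
  rw [partTerm, List.finRange_succ, List.map_cons, List.prod_cons, List.map_map,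
    partFactor_insB_zero m y hBne, one_mul]
  congr 1
  apply List.map_congr_left
  intro j' _
  rw [Function.comp_apply, partFactor_insB_succ m y hπ hB j', Function.update_apply]
  by_cases h : j' = j
  · subst h
    rw [if_pos hj, if_pos rfl]
  · rw [if_neg (fun hh => h (WithBot.coe_inj.1 (hj.symm.trans hh)).symm), if_neg h]

lemma map_update_finRange {γ : Type*} (f : Fin n → γ) (j : Fin n) (c : γ) :
    (List.finRange n).map (Function.update f j c) =
      ((List.finRange n).map f).set j.val c := by
  apply List.ext_getElem (by simp)
  intro i h1 h2
  have hi : i < n := by simpa using h1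
  rw [List.getElem_map, List.getElem_set, List.getElem_finRange, Function.update_apply]
  by_cases hij : j.val = i
  · have heq : (Fin.cast (by simp) (⟨i, by simpa using h1⟩ : Fin ((List.finRange n).length))) = j :=
      Fin.ext (by simpa using hij.symm)
    rw [if_pos hij, if_pos heq]
  · have hne : ¬ (Fin.cast (by simp) (⟨i, by simpa using h1⟩ : Fin ((List.finRange n).length))) = j :=
      fun h => hij (by simpa using (congrArg Fin.val h).symm)
    rw [if_neg hij, if_neg hne, List.getElem_map, List.getElem_finRange]

lemma prod_set_zero {R : Type*} [Ring R] (l : List R) (j : ℕ) (hj : j < l.length) :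
    (l.set j (0 : R)).prod = 0 := by
  rw [List.prod_set, if_pos hj, mul_zero, zero_mul]

lemma prod_set_sum {R : Type*} [Ring R] (l : List R) (j : ℕ) (hj : j < l.length)
    {γ : Type*} (s : Finset γ) (c : γ → R) :
    (l.set j (∑ b ∈ s, c b)).prod = ∑ b ∈ s, (l.set j (c b)).prod := by
  simp only [List.prod_set, if_pos hj, Finset.mul_sum, Finset.sum_mul]

lemma sum_filter_max {R : Type*} [AddCommMonoid R] {π : Finset (Finset (Fin n))}
    (hπ : IsSetPartition π) (f : Finset (Fin n) → R) :
    ∑ j : Fin n, ∑ B ∈ π.filter (fun B => B.max = (j : WithBot (Fin n))), f B =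
      ∑ B ∈ π, f B := by
  rw [Finset.sum_congr rfl (fun (j : Fin n) _ =>
    Finset.sum_filter (fun B => B.max = (j : WithBot (Fin n))) f), Finset.sum_comm]
  apply Finset.sum_congr rfl
  intro B hB
  obtain ⟨b, hb⟩ := Finset.max_of_nonempty
    (Finset.nonempty_iff_ne_empty.2 (fun h => hπ.1 (h ▸ hB)))
  rw [Finset.sum_eq_single b ?_ (fun h => absurd (Finset.mem_univ b) h), if_pos hb]
  intro c _ hcb
  rw [if_neg (fun h => hcb (WithBot.coe_inj.1 (hb.symm.trans h)).symm)]

variable (t : TensorAlgebra k M →ₗ[k] TensorAlgebra k M →ₗ[k] TensorAlgebra k M)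

lemma t_ι_one (hcounit : ∀ U, t U 1 = algebraMap k (TensorAlgebra k M) (counit k M U))
    (x : M) : t (ι k x) 1 = 0 := by
  rw [hcounit, counit]
  rw [show (TensorAlgebra.lift k (0 : M →ₗ[k] k) : TensorAlgebra k M →ₐ[k] k)
    ((ι k) x) = (0 : M →ₗ[k] k) x from TensorAlgebra.lift_ι_apply _ _]
  simp

lemma t_list_prod
    (hcounit : ∀ U, t U 1 = algebraMap k (TensorAlgebra k M) (counit k M U))
    (hleib : ∀ (x : M) (V W : TensorAlgebra k M),
      t (ι k x) (V * W) = t (ι k x) V * W + V * t (ι k x) W)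
    (x : M) (l : List (TensorAlgebra k M)) :
    t (ι k x) l.prod =
      ∑ j ∈ Finset.range l.length, ((l.set j (t (ι k x) (l.getD j 1))).prod) := by
  induction l with
  | nil => simp [t_ι_one t hcounit x]
  | cons a l ih =>
    rw [List.prod_cons, hleib, ih]
    rw [List.length_cons, Finset.sum_range_succ']
    simp only [List.getD_cons_succ, List.getD_cons_zero, List.set_cons_succ,
      List.set_cons_zero, List.prod_cons]
    rw [Finset.mul_sum, add_comm]

lemma glL_ι (hone : ∀ W, t 1 W = W) (x : M) (V : TensorAlgebra k M) :
    glL t (ι k x) V = ι k x * V + t (ι k x) V := by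
  have hun : (unshuffle k M) (ι k x) = (ι k x) ⊗ₜ[k] 1 + 1 ⊗ₜ[k] (ι k x) := by
    rw [unshuffle]
    rw [show (TensorAlgebra.lift k (primMap k M)) ((ι k) x) = primMap k M x from
      TensorAlgebra.lift_ι_apply _ _]
    simp [primMap, TensorProduct.mk_apply]
  rw [glL]
  simp only [LinearMap.comp_apply, AlgHom.toLinearMap_apply, hun, map_add,
    TensorProduct.lift.tmul, LinearMap.coe_comp, Function.comp_apply,
    LinearMap.lcomp_apply, LinearMap.llcomp_apply, LinearMap.mul_apply',
    LinearMap.add_apply]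
  rw [hone, one_mul]

lemma t_partTerm
    (hcounit : ∀ U, t U 1 = algebraMap k (TensorAlgebra k M) (counit k M U))
    (hbase : ∀ x y : M, t (ι k x) (ι k y) = ι k (m x y))
    (hleib : ∀ (x : M) (V W : TensorAlgebra k M),
      t (ι k x) (V * W) = t (ι k x) V * W + V * t (ι k x) W)
    (y : Fin (n + 1) → M) {π : Finset (Finset (Fin n))} (hπ : IsSetPartition π) :
    t (ι k (y 0)) (partTerm m (fun i => y i.succ) π) =
      ∑ B ∈ π, partTerm m y (insB π B) := by
  classical
  set f : Fin n → TensorAlgebra k M := partFactor m (fun i => y i.succ) π with hf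
  set l : List (TensorAlgebra k M) := (List.finRange n).map f with hl
  have hlen : l.length = n := by simp [hl]
  have hget : ∀ j : Fin n, l.getD j.val 1 = f j := by
    intro j
    rw [List.getD_eq_getElem _ _ (by rw [hlen]; exact j.isLt)]
    simp [hl]
  rw [partTerm, ← hf, ← hl, t_list_prod t hcounit hleib, hlen,
    ← Fin.sum_univ_eq_sum_range (fun j => ((l.set j (t (ι k (y 0)) (l.getD j 1))).prod)) n]
  have hterm : ∀ j : Fin n, ((l.set j.val (t (ι k (y 0)) (l.getD j.val 1))).prod) =
      ∑ B ∈ π.filter (fun B => B.max = (j : WithBot (Fin n))), partTerm m y (insB π B) := by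
    intro j
    rw [hget j]
    by_cases hfil : π.filter (fun B => B.max = (j : WithBot (Fin n))) = ∅
    · rw [hfil, Finset.sum_empty]
      have hfj : f j = 1 := by rw [hf, partFactor, if_pos hfil]
      rw [hfj, t_ι_one t hcounit, prod_set_zero _ _ (by rw [hlen]; exact j.isLt)]
    · have hfj : f j = ∑ B ∈ π.filter (fun B => B.max = (j : WithBot (Fin n))),
          ι k (nest (fun a b => (m a) b) (fun i => y i.succ) (B.sort (· ≤ ·))) := by
        rw [hf, partFactor, if_neg hfil]
      rw [hfj, map_sum, prod_set_sum _ _ (by rw [hlen]; exact j.isLt)]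
      apply Finset.sum_congr rfl
      intro B hB
      obtain ⟨hBπ, hBmax⟩ := Finset.mem_filter.1 hB
      rw [hbase, partTerm_insB m y hπ hBπ hBmax, map_update_finRange, ← hl]
  rw [Finset.sum_congr rfl (fun j _ => hterm j)]
  exact sum_filter_max hπ _

lemma gl_fold
    (hone : ∀ W, t 1 W = W)
    (hcounit : ∀ U, t U 1 = algebraMap k (TensorAlgebra k M) (counit k M U))
    (hbase : ∀ x y : M, t (ι k x) (ι k y) = ι k (m x y))
    (hleib : ∀ (x : M) (V W : TensorAlgebra k M),
      t (ι k x) (V * W) = t (ι k x) V * W + V * t (ι k x) W) :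
    ∀ (n : ℕ) (y : Fin n → M),
      (((List.finRange n).map (fun i => ι k (y i))).foldr (fun a b => glL t a b) 1) =
        ∑ π ∈ Finset.univ.filter (fun π : Finset (Finset (Fin n)) => IsSetPartition π),
          partTerm m y π := by
  intro n
  induction n with
  | zero =>
    intro y
    rw [show (Finset.univ.filter (fun π : Finset (Finset (Fin 0)) => IsSetPartition π))
        = {(∅ : Finset (Finset (Fin 0)))} from ?_]
    · simp [partTerm]
    · ext π
      simp only [Finset.mem_filter, Finset.mem_univ, true_and, Finset.mem_singleton]
      constructor
      · intro hπ
        by_contra h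
        obtain ⟨B, hB⟩ := Finset.nonempty_iff_ne_empty.2 h
        exact hπ.1 ((Finset.eq_empty_of_isEmpty B) ▸ hB)
      · rintro rfl
        exact ⟨Finset.notMem_empty _, fun i => i.elim0⟩
  | succ n ih =>
    intro y
    rw [List.finRange_succ, List.map_cons, List.foldr_cons, List.map_map]
    rw [show ((List.finRange n).map ((fun i => ι k (y i)) ∘ Fin.succ)) =
      (List.finRange n).map (fun i => ι k ((fun i => y i.succ) i)) from rfl]
    rw [ih (fun i => y i.succ), glL_ι t hone, Finset.mul_sum, map_sum,
      sum_partitions_succ (f := partTerm m y), ← Finset.sum_add_distrib]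
    apply Finset.sum_congr rfl
    intro π hπ'
    have hπ : IsSetPartition π := (Finset.mem_filter.1 hπ').2
    rw [partTerm_ins0, t_partTerm m t hcounit hbase hleib y hπ]

lemma isSetPartition_discrete : IsSetPartition (discretePartition n) := by
  constructor
  · intro h
    obtain ⟨i, -, hi⟩ := Finset.mem_image.1 h
    exact Finset.singleton_ne_empty i hi
  · intro i
    refine ⟨{i}, ⟨Finset.mem_image_of_mem _ (Finset.mem_univ i),
      Finset.mem_singleton_self i⟩, ?_⟩
    rintro D ⟨hD, hiD⟩
    obtain ⟨j, -, rfl⟩ := Finset.mem_image.1 hD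
    rw [Finset.mem_singleton.1 hiD]

lemma partFactor_discrete (y : Fin n → M) (i : Fin n) :
    partFactor m y (discretePartition n) i = ι k (y i) := by
  have hfil : (discretePartition n).filter
      (fun B => B.max = (i : WithBot (Fin n))) = {({i} : Finset (Fin n))} := by
    rw [discretePartition, Finset.filter_image]
    have huniv : Finset.univ.filter
        (fun j : Fin n => ({j} : Finset (Fin n)).max = (i : WithBot (Fin n))) = {i} := by
      ext j
      simp only [Finset.mem_filter, Finset.mem_univ, true_and, Finset.max_singleton,
        WithBot.coe_inj, Finset.mem_singleton]
    rw [huniv, Finset.image_singleton]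
  rw [partFactor, hfil, if_neg (Finset.singleton_ne_empty _), Finset.sum_singleton,
    Finset.sort_singleton]
  rfl

lemma partTerm_discrete (y : Fin n → M) :
    partTerm m y (discretePartition n) = ((List.finRange n).map (fun i => ι k (y i))).prod := by
  rw [partTerm]
  congr 1
  exact List.map_congr_left (fun i _ => partFactor_discrete m y i)

end Algebra

end GLExp

/-- For `y₁,…,yₙ ∈ M`, the Grossman–Larson product of the letters
expands as `y₁ ∗ ⋯ ∗ yₙ = y₁⋯yₙ + Σ_{π ≠ 0̂} (y₁⋯yₙ)^π`, summing over all set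
partitions of `{1,…,n}` different from the discrete partition `0̂`. -/
theorem glProd_letters_partition_expansion {k M : Type*} [CommRing k] [AddCommGroup M]
    [Module k M] (m : M →ₗ[k] M →ₗ[k] M)
    (t : TensorAlgebra k M →ₗ[k] TensorAlgebra k M →ₗ[k] TensorAlgebra k M)
    (hone : ∀ W, t 1 W = W)
    (hcounit : ∀ U, t U 1 = algebraMap k (TensorAlgebra k M) (counit k M U))
    (hbase : ∀ x y : M, t (ι k x) (ι k y) = ι k (m x y))
    (hleib : ∀ (x : M) (V W : TensorAlgebra k M),
      t (ι k x) (V * W) = t (ι k x) V * W + V * t (ι k x) W)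
    (hassoc : ∀ (x : M) (V W : TensorAlgebra k M),
      t (ι k x * V) W = t (ι k x) (t V W) - t (t (ι k x) V) W) :
    ∀ (n : ℕ) (y : Fin n → M),
      (((List.finRange n).map (fun i => ι k (y i))).foldr (fun a b => glL t a b) 1) =
        ((List.finRange n).map (fun i => ι k (y i))).prod +
          ∑ π ∈ Finset.univ.filter
              (fun π : Finset (Finset (Fin n)) =>
                IsSetPartition π ∧ π ≠ discretePartition n),
            partTerm m y π := by
  intro n y
  rw [GLExp.gl_fold m t hone hcounit hbase hleib n y]
  have hsplit : (Finset.univ.filter (fun π : Finset (Finset (Fin n)) => IsSetPartition π)) =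
      insert (discretePartition n) (Finset.univ.filter
        (fun π : Finset (Finset (Fin n)) => IsSetPartition π ∧ π ≠ discretePartition n)) := by
    ext π
    simp only [Finset.mem_filter, Finset.mem_univ, true_and, Finset.mem_insert]
    constructor
    · intro h
      by_cases hd : π = discretePartition n
      · exact Or.inl hd
      · exact Or.inr ⟨h, hd⟩
    · rintro (rfl | ⟨h, -⟩)
      · exact GLExp.isSetPartition_discrete
      · exact h
  rw [hsplit, Finset.sum_insert (fun h => ((Finset.mem_filter.1 h).2.2 rfl)),
    GLExp.partTerm_discrete]
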